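/- For all x, y ∈ ℝ² one has τ̂(x) + τ̂(y) − τ̂(x+y) ≥ Δ·(‖x‖ + ‖y‖ − ‖x+y‖), where Δ := inf_θ (f''(θ) + f(θ)). -/

import Mathlib

open scoped RealInnerProductSpace
open Real Set Filter Topology Complex

private lemma ode_support (g : ℝ → ℝ) (hg : ContDiff ℝ 2 g)
    (hineq : ∀ θ : ℝ, 0 ≤ deriv (deriv g) θ + g θ) (φ : ℝ) :
    ∀ t ∈ Set.Icc (0:ℝ) π,
      g φ * Real.cos t + deriv g φ * Real.sin t ≤ g (φ + t) := by
  obtain ⟨hdiff, hg1⟩ : Differentiable ℝ g ∧ ContDiff ℝ 1 (deriv g) := by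
    rw [(by norm_num : (2 : WithTop ℕ∞) = 1 + 1), contDiff_succ_iff_deriv] at hg
    exact ⟨hg.1, hg.2.2⟩
  obtain ⟨hdiff1, hcont2⟩ := contDiff_one_iff_deriv.mp hg1
  set g1 := deriv g with hg1def
  set g2 := deriv g1 with hg2def
  set u : ℝ → ℝ := fun s => g (φ + s) - g φ * Real.cos s - g1 φ * Real.sin s with hu
  set u1 : ℝ → ℝ := fun s => g1 (φ + s) + g φ * Real.sin s - g1 φ * Real.cos s with hu1
  set v : ℝ → ℝ := fun s => u1 s * Real.sin s - u s * Real.cos s with hv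
  have hcomp : ∀ s : ℝ, HasDerivAt (fun s : ℝ => g (φ + s)) (g1 (φ + s)) s := by
    intro s
    simpa [Function.comp_def] using ((hdiff (φ + s)).hasDerivAt.comp s ((hasDerivAt_id s).const_add φ))
  have hcomp1 : ∀ s : ℝ, HasDerivAt (fun s : ℝ => g1 (φ + s)) (g2 (φ + s)) s := by
    intro s
    simpa [Function.comp_def] using ((hdiff1 (φ + s)).hasDerivAt.comp s ((hasDerivAt_id s).const_add φ))
  have hdu : ∀ s, HasDerivAt u (u1 s) s := by
    intro s
    have h := ((hcomp s).sub ((Real.hasDerivAt_cos s).const_mul (g φ))).sub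
      ((Real.hasDerivAt_sin s).const_mul (g1 φ))
    convert h using 1 <;> try rfl
    simp only [hu1]
    ring
  have hdu1 : ∀ s, HasDerivAt u1 (g2 (φ + s) + g φ * Real.cos s + g1 φ * Real.sin s) s := by
    intro s
    have h := ((hcomp1 s).add ((Real.hasDerivAt_sin s).const_mul (g φ))).sub
      ((Real.hasDerivAt_cos s).const_mul (g1 φ))
    convert h using 1 <;> try rfl
    ring
  have hdv : ∀ s, HasDerivAt v ((g2 (φ + s) + g (φ + s)) * Real.sin s) s := by
    intro s
    have h := ((hdu1 s).mul (Real.hasDerivAt_sin s)).sub ((hdu s).mul (Real.hasDerivAt_cos s))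
    convert h using 1 <;> try rfl
    simp only [hu, hu1]
    ring
  have hv0 : v 0 = 0 := by simp [hv, hu1, hu]
  have hvcont : Continuous v := by
    rw [continuous_iff_continuousAt]; exact fun s => (hdv s).continuousAt
  have hvmono : MonotoneOn v (Set.Icc 0 π) := by
    apply monotoneOn_of_deriv_nonneg (convex_Icc 0 π) hvcont.continuousOn
    · exact fun s _ => ((hdv s).differentiableAt).differentiableWithinAt
    · intro s hs
      rw [interior_Icc] at hs
      rw [(hdv s).deriv]
      exact mul_nonneg (hineq (φ + s)) (Real.sin_nonneg_of_nonneg_of_le_pi hs.1.le hs.2.le)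
  have hvnonneg : ∀ s ∈ Set.Icc (0:ℝ) π, 0 ≤ v s := by
    intro s hs
    rw [← hv0]
    exact hvmono (Set.left_mem_Icc.mpr Real.pi_pos.le) hs hs.1
  set w : ℝ → ℝ := fun s => u s / Real.sin s with hw
  have hwmono : MonotoneOn w (Set.Ioo 0 π) := by
    have hder : ∀ s ∈ Set.Ioo (0:ℝ) π, HasDerivAt w (v s / (Real.sin s)^2) s := by
      intro s hs
      have hsin : Real.sin s ≠ 0 := ne_of_gt (Real.sin_pos_of_pos_of_lt_pi hs.1 hs.2)
      exact (hdu s).div (Real.hasDerivAt_sin s) hsin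
    apply monotoneOn_of_deriv_nonneg (convex_Ioo 0 π)
    · intro s hs; exact (hder s hs).continuousAt.continuousWithinAt
    · rw [interior_Ioo]; exact fun s hs => (hder s hs).differentiableAt.differentiableWithinAt
    · rw [interior_Ioo]; intro s hs
      rw [(hder s hs).deriv]
      exact div_nonneg (hvnonneg s ⟨hs.1.le, hs.2.le⟩) (sq_nonneg _)
  have hu0 : u 0 = 0 := by simp [hu]
  have hu10 : u1 0 = 0 := by simp [hu1]
  have htend : Filter.Tendsto w (𝓝[>] (0:ℝ)) (𝓝 0) := by
    have h1 : Filter.Tendsto (fun s => u s / s) (𝓝[≠] (0:ℝ)) (𝓝 0) := by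
      have := hasDerivAt_iff_tendsto_slope.mp (hdu 0)
      rw [hu10] at this
      refine this.congr' ?_
      filter_upwards [self_mem_nhdsWithin] with s hs
      simp [slope_def_field, hu0]
    have h2 : Filter.Tendsto (fun s => Real.sin s / s) (𝓝[≠] (0:ℝ)) (𝓝 1) := by
      have := hasDerivAt_iff_tendsto_slope.mp (Real.hasDerivAt_sin 0)
      rw [Real.cos_zero] at this
      refine this.congr' ?_
      filter_upwards [self_mem_nhdsWithin] with s hs
      simp [slope_def_field]
    have h3 : Filter.Tendsto (fun s => (u s / s) / (Real.sin s / s)) (𝓝[≠] (0:ℝ)) (𝓝 0) := by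
      have := h1.div h2 one_ne_zero
      rw [zero_div] at this
      exact this
    have h4 : Filter.Tendsto w (𝓝[≠] (0:ℝ)) (𝓝 0) := by
      refine h3.congr' ?_
      filter_upwards [self_mem_nhdsWithin] with s hs
      rw [hw]
      rcases eq_or_ne (Real.sin s) 0 with h | h
      · simp [h]
      · have hs0 : s ≠ 0 := hs
        field_simp
    exact h4.mono_left (nhdsWithin_mono 0 (fun x hx => ne_of_gt hx))
  have hwnonneg : ∀ s ∈ Set.Ioo (0:ℝ) π, 0 ≤ w s := by
    intro s hs
    refine le_of_tendsto htend ?_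
    filter_upwards [Ioo_mem_nhdsGT_of_mem (Set.left_mem_Ico.mpr hs.1)] with r hr
    exact hwmono ⟨hr.1, hr.2.trans hs.2⟩ hs hr.2.le
  have hunonneg : ∀ s ∈ Set.Ioo (0:ℝ) π, 0 ≤ u s := by
    intro s hs
    have hsin : 0 < Real.sin s := Real.sin_pos_of_pos_of_lt_pi hs.1 hs.2
    have : u s = w s * Real.sin s := by rw [hw]; field_simp
    rw [this]
    exact mul_nonneg (hwnonneg s hs) hsin.le
  have hukey : ∀ t ∈ Set.Icc (0:ℝ) π, 0 ≤ u t := by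
    intro t ht
    rcases ht.1.eq_or_lt with h0 | h0
    · rw [← h0, hu0]
    rcases ht.2.eq_or_lt with hpi | hpi
    · rw [hpi]
      have hcont : Filter.Tendsto u (𝓝[<] π) (𝓝 (u π)) :=
        (hdu π).continuousAt.continuousWithinAt
      refine ge_of_tendsto hcont ?_
      filter_upwards [Ioo_mem_nhdsLT_of_mem (Set.right_mem_Ioc.mpr Real.pi_pos)] with r hr
      exact hunonneg r hr
    · exact hunonneg t ⟨h0, hpi⟩
  intro t ht
  have := hukey t ht
  rw [hu] at this
  dsimp at this
  linarith

private lemma ode_support_abs (g : ℝ → ℝ) (hg : ContDiff ℝ 2 g)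
    (hineq : ∀ θ : ℝ, 0 ≤ deriv (deriv g) θ + g θ) (φ t : ℝ) (ht : |t| ≤ π) :
    g φ * Real.cos t + deriv g φ * Real.sin t ≤ g (φ + t) := by
  rcases le_or_gt 0 t with h | h
  · exact ode_support g hg hineq φ t ⟨h, (abs_le.mp ht).2⟩
  · set G : ℝ → ℝ := fun s => g (2 * φ - s) with hG
    have hGc : ContDiff ℝ 2 G := hg.comp (contDiff_const.sub contDiff_id)
    have hdG : deriv G = fun s => -deriv g (2 * φ - s) := by
      funext s
      exact deriv_comp_const_sub g (2*φ) s
    have hddG : ∀ s, deriv (deriv G) s = deriv (deriv g) (2 * φ - s) := by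
      intro s
      rw [hdG, deriv.fun_neg, deriv_comp_const_sub]
      ring
    have hineqG : ∀ θ, 0 ≤ deriv (deriv G) θ + G θ := by
      intro θ; rw [hddG]; exact hineq _
    have key := ode_support G hGc hineqG φ (-t) ⟨by linarith, by linarith [(abs_le.mp ht).1]⟩
    rw [hdG] at key
    simp only [hG, Real.cos_neg, Real.sin_neg] at key
    have e1 : 2 * φ - (φ + -t) = φ + t := by ring
    have e2 : 2 * φ - φ = φ := by ring
    rw [e1, e2] at key
    linarith

/-- Positive stiffness implies the sharp triangle inequality with
constant `Δ = inf_θ (f''(θ) + f(θ))`. -/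
theorem sharp_triangle_inequality_of_positive_stiffness
    (τ : EuclideanSpace ℝ (Fin 2) → ℝ)
    (hhom : ∀ c : ℝ, 0 ≤ c → ∀ x, τ (c • x) = c * τ x)
    (hpos : ∀ x : EuclideanSpace ℝ (Fin 2), x ≠ 0 → 0 < τ x)
    (f : ℝ → ℝ)
    (hf : ∀ θ : ℝ, f θ = τ (WithLp.toLp 2 ![Real.cos θ, Real.sin θ] : EuclideanSpace ℝ (Fin 2)))
    (hsmooth : ContDiff ℝ 2 f)
    (Δ : ℝ)
    (hΔ : Δ = ⨅ θ : ℝ, (deriv (deriv f) θ + f θ))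
    (hΔpos : 0 < Δ) :
    ∀ x y : EuclideanSpace ℝ (Fin 2),
      τ x + τ y - τ (x + y) ≥ Δ * (‖x‖ + ‖y‖ - ‖x + y‖) := by
  -- τ of 0 is 0
  have hτ0 : τ 0 = 0 := by
    have := hhom 0 le_rfl 0
    simpa using this
  -- periodicity of f
  have hper : Function.Periodic f (2 * π) := by
    intro θ
    rw [hf, hf]
    norm_num [Real.cos_add_two_pi, Real.sin_add_two_pi]
  -- Δ is a lower bound for f'' + f
  have hΔle : ∀ θ : ℝ, Δ ≤ deriv (deriv f) θ + f θ := by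
    have hper1 : Function.Periodic (deriv f) (2 * π) := by
      intro θ
      rw [← deriv_comp_add_const f (2*π) θ, funext hper]
    have hper2 : Function.Periodic (deriv (deriv f)) (2 * π) := by
      intro θ
      rw [← deriv_comp_add_const (deriv f) (2*π) θ, funext hper1]
    have hf1 : ContDiff ℝ 1 (deriv f) := by
      have h2 := hsmooth
      rw [(by norm_num : (2 : WithTop ℕ∞) = 1 + 1), contDiff_succ_iff_deriv] at h2
      exact h2.2.2
    have hconth : Continuous (fun θ : ℝ => deriv (deriv f) θ + f θ) :=
      (contDiff_one_iff_deriv.mp hf1).2.add hsmooth.continuous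
    have hperh : Function.Periodic (fun θ : ℝ => deriv (deriv f) θ + f θ) (2 * π) := by
      intro θ
      simp only [hper θ, hper2 θ]
    obtain ⟨m, hm, hmin⟩ := isCompact_Icc.exists_isMinOn
      (Set.nonempty_Icc.mpr (by positivity : (0:ℝ) ≤ 2 * π)) hconth.continuousOn
    have hbdd : ∀ θ : ℝ, deriv (deriv f) m + f m ≤ deriv (deriv f) θ + f θ := by
      intro θ
      obtain ⟨y, hy, hyeq⟩ := hperh.exists_mem_Ico₀ Real.two_pi_pos θ
      have := hmin (Set.mem_Icc.mpr ⟨hy.1, hy.2.le⟩)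
      simpa [hyeq] using this
    intro θ
    rw [hΔ]
    exact ciInf_le ⟨deriv (deriv f) m + f m,
      fun r hr => by obtain ⟨θ', rfl⟩ := hr; exact hbdd θ'⟩ θ
  -- the shifted function g = f - Δ
  set g : ℝ → ℝ := fun θ => f θ - Δ with hgdef
  have hgc : ContDiff ℝ 2 g := hsmooth.sub contDiff_const
  have hdg : deriv g = deriv f := by
    funext θ
    rw [hgdef]
    exact deriv_sub_const Δ
  have hineqg : ∀ θ : ℝ, 0 ≤ deriv (deriv g) θ + g θ := by
    intro θ
    rw [hdg, hgdef]
    have := hΔle θ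
    simp only
    linarith
  have hsupp : ∀ φ t : ℝ, |t| ≤ π →
      (f φ - Δ) * Real.cos t + deriv f φ * Real.sin t ≤ f (φ + t) - Δ := by
    intro φ t ht
    have := ode_support_abs g hgc hineqg φ t ht
    rw [hdg] at this
    simpa [hgdef] using this
  -- complexification
  set c : EuclideanSpace ℝ (Fin 2) → ℂ := fun x => (x 0 : ℂ) + (x 1 : ℂ) * Complex.I with hc
  have habs : ∀ x : EuclideanSpace ℝ (Fin 2), ‖c x‖ = ‖x‖ := by
    intro x
    rw [EuclideanSpace.norm_eq]
    simp [hc, Complex.norm_def, Complex.normSq_apply, Fin.sum_univ_two, Real.norm_eq_abs,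
      sq_abs]
    ring_nf
  have hcne : ∀ x : EuclideanSpace ℝ (Fin 2), x ≠ 0 → c x ≠ 0 := by
    intro x hx
    have : ‖c x‖ ≠ 0 := by
      rw [habs]
      exact norm_ne_zero_iff.mpr hx
    exact fun h => this (by rw [h]; simp)
  -- polar representation of τ
  have hpolar : ∀ (x : EuclideanSpace ℝ (Fin 2)) (a : ℝ),
      c x = (‖x‖ : ℂ) * Complex.exp (a * Complex.I) → τ x = ‖x‖ * f a := by
    intro x a hx
    have hre := congrArg Complex.re hx
    have him := congrArg Complex.im hx
    simp [hc, Complex.exp_ofReal_mul_I_re, Complex.exp_ofReal_mul_I_im, Complex.mul_re,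
      Complex.mul_im] at hre him
    have hxe : x = ‖x‖ • (WithLp.toLp 2 ![Real.cos a, Real.sin a] : EuclideanSpace ℝ (Fin 2)) := by
      ext i
      fin_cases i
      · simpa using hre
      · simpa using him
    conv_lhs => rw [hxe]
    rw [hhom _ (norm_nonneg x), ← hf]
  intro x y
  rcases eq_or_ne x 0 with rfl | hx0
  · simp [hτ0]
  rcases eq_or_ne y 0 with rfl | hy0
  · simp [hτ0]
  rcases eq_or_ne (x + y) 0 with hxy | hxy
  · -- y = -x
    have hyx : y = -x := by
      have := hxy
      linear_combination (norm := module) this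
    subst hyx
    rw [hxy, hτ0]
    have hnorm : ‖(-x : EuclideanSpace ℝ (Fin 2))‖ = ‖x‖ := norm_neg x
    rw [hnorm, norm_zero]
    -- polar of x and -x
    set a : ℝ := Complex.arg (c x) with ha
    have hxpol : c x = (‖x‖ : ℂ) * Complex.exp (a * Complex.I) := by
      rw [ha, ← habs]
      exact (Complex.norm_mul_exp_arg_mul_I (c x)).symm
    have hxpol' : c (-x) = (‖(-x : EuclideanSpace ℝ (Fin 2))‖ : ℂ) *
        Complex.exp (((a + π : ℝ) : ℂ) * Complex.I) := by
      have hneg : c (-x) = -(c x) := by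
        simp [hc]
        ring
      rw [hneg, hxpol, hnorm]
      push_cast
      rw [add_mul, Complex.exp_add, Complex.exp_pi_mul_I]
      ring
    have h1 : τ x = ‖x‖ * f a := hpolar x a hxpol
    have h2 : τ (-x) = ‖x‖ * f (a + π) := by
      rw [← hnorm]
      exact hpolar (-x) (a + π) hxpol'
    have hs := hsupp a π (by rw [abs_of_pos Real.pi_pos])
    rw [Real.cos_pi, Real.sin_pi] at hs
    have hxn : (0:ℝ) ≤ ‖x‖ := norm_nonneg x
    nlinarith [mul_le_mul_of_nonneg_left hs hxn]
  · -- general case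
    set z := x + y with hz
    set φ : ℝ := Complex.arg (c z) with hφ
    set tx : ℝ := Complex.arg (c x * (starRingEnd ℂ) (c z)) with htx
    set ty : ℝ := Complex.arg (c y * (starRingEnd ℂ) (c z)) with hty
    have hcz : c z = c x + c y := by
      simp [hc, hz]
      ring
    have hzpol : c z = (‖z‖ : ℂ) * Complex.exp (φ * Complex.I) := by
      rw [hφ, ← habs]
      exact (Complex.norm_mul_exp_arg_mul_I (c z)).symm
    have hczne : c z ≠ 0 := hcne z hxy
    have habsz : ‖c z‖ ≠ 0 := by
      rw [habs]; exact norm_ne_zero_iff.mpr hxy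
    -- polar of x and y with respect to φ
    have hpol : ∀ w : EuclideanSpace ℝ (Fin 2), w ≠ 0 →
        c w = (‖w‖ : ℂ) * Complex.exp (((φ + Complex.arg (c w * (starRingEnd ℂ) (c z)) : ℝ) : ℂ) * Complex.I) := by
      intro w hw
      set s : ℝ := Complex.arg (c w * (starRingEnd ℂ) (c z)) with hs
      have h1 : (‖c z‖ : ℂ) * Complex.exp (φ * Complex.I) = c z :=
        Complex.norm_mul_exp_arg_mul_I (c z)
      have h2 : (‖c w * (starRingEnd ℂ) (c z)‖ : ℂ) * Complex.exp (s * Complex.I)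
          = c w * (starRingEnd ℂ) (c z) := Complex.norm_mul_exp_arg_mul_I _
      rw [norm_mul, Complex.norm_conj] at h2
      have h3 : c z * (starRingEnd ℂ) (c z) = ((‖c z‖ : ℂ))^2 := by
        rw [Complex.mul_conj]
        norm_cast
        exact (Complex.sq_norm (c z)).symm
      rw [← habs]
      push_cast
      rw [add_mul, Complex.exp_add]
      apply mul_left_cancel₀ (pow_ne_zero 2 (by exact_mod_cast habsz) :
        ((‖c z‖:ℂ))^2 ≠ 0)
      push_cast at h2
      linear_combination (-((‖c z‖ : ℂ) * (‖c w‖ : ℂ) *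
          Complex.exp (s * Complex.I))) * h1 - c z * h2 - c w * h3
    have hxpol : c x = (‖x‖ : ℂ) * Complex.exp (((φ + tx : ℝ) : ℂ) * Complex.I) := by
      have := hpol x hx0
      rw [← htx] at this
      exact this
    have hypol : c y = (‖y‖ : ℂ) * Complex.exp (((φ + ty : ℝ) : ℂ) * Complex.I) := by
      have := hpol y hy0
      rw [← hty] at this
      exact this
    -- the sum identity
    have hsum : (‖x‖ : ℂ) * Complex.exp (tx * Complex.I) +
        (‖y‖ : ℂ) * Complex.exp (ty * Complex.I) = (‖z‖ : ℂ) := by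
      have heq : ((‖x‖ : ℂ) * Complex.exp (tx * Complex.I) +
          (‖y‖ : ℂ) * Complex.exp (ty * Complex.I)) * Complex.exp (φ * Complex.I)
          = (‖z‖ : ℂ) * Complex.exp (φ * Complex.I) := by
        rw [← hzpol, hcz, hxpol, hypol]
        have e1 : ((φ + tx : ℝ) : ℂ) * Complex.I = ↑φ * Complex.I + ↑tx * Complex.I := by
          push_cast; ring
        have e2 : ((φ + ty : ℝ) : ℂ) * Complex.I = ↑φ * Complex.I + ↑ty * Complex.I := by
          push_cast; ring
        rw [e1, e2, Complex.exp_add, Complex.exp_add]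
        ring
      exact mul_right_cancel₀ (Complex.exp_ne_zero _) heq
    have hre := congrArg Complex.re hsum
    have him := congrArg Complex.im hsum
    simp [Complex.add_re, Complex.add_im, Complex.mul_re, Complex.mul_im,
      Complex.exp_ofReal_mul_I_re, Complex.exp_ofReal_mul_I_im] at hre him
    -- angle bounds
    have htxb : |tx| ≤ π := by
      rw [abs_le]
      exact ⟨(Complex.arg_mem_Ioc _).1.le, (Complex.arg_mem_Ioc _).2⟩
    have htyb : |ty| ≤ π := by
      rw [abs_le]
      exact ⟨(Complex.arg_mem_Ioc _).1.le, (Complex.arg_mem_Ioc _).2⟩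
    -- τ values
    have hτx : τ x = ‖x‖ * f (φ + tx) := hpolar x (φ + tx) hxpol
    have hτy : τ y = ‖y‖ * f (φ + ty) := hpolar y (φ + ty) hypol
    have hτz : τ z = ‖z‖ * f φ := hpolar z φ hzpol
    -- support inequalities
    have hsx := mul_le_mul_of_nonneg_left (hsupp φ tx htxb) (norm_nonneg x)
    have hsy := mul_le_mul_of_nonneg_left (hsupp φ ty htyb) (norm_nonneg y)
    have hD1 : (f φ - Δ) * (‖x‖ * Real.cos tx + ‖y‖ * Real.cos ty) = (f φ - Δ) * ‖z‖ := by
      rw [hre]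
    have hD2 : deriv f φ * (‖x‖ * Real.sin tx + ‖y‖ * Real.sin ty) = 0 := by
      rw [him]; ring
    rw [ge_iff_le, hτx, hτy, hτz]
    nlinarith [hsx, hsy, hD1, hD2]
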